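/- Let n ≥ 3 and let f(s) = Σ_{i=0}^n a_i s^i have positive coefficients (not necessarily stable). Then for every m ∈ {3, ..., n} there exists a Hurwitz stable polynomial g(s) = Σ_{i=0}^m b_i s^i with positive coefficients such that every polynomial F_j(s) = Σ_{i=0}^m a_{j+i} b_i s^i (j = 0, ..., n−m) is Hurwitz stable. -/

import Mathlib

/-- A real polynomial is Hurwitz stable if all its complex zeros have negative real parts. -/
def HurwitzStable (f : Polynomial ℝ) : Prop :=
  ∀ z : ℂ, Polynomial.aeval z f = 0 → z.re < 0

private lemma geom_low_aux (t : ℕ → ℝ) :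
    ∀ k, (∀ i ≤ k, 0 ≤ t i) → (∀ i < k, 4 * t i ≤ t (i + 1)) →
      ∑ i ∈ Finset.range k, t i ≤ (1 / 3) * t k := by
  intro k
  induction k with
  | zero => intro h _; simpa using by linarith [h 0 le_rfl]
  | succ k ih =>
    intro h0 hstep
    rw [Finset.sum_range_succ]
    have h1 := ih (fun i hi => h0 i (by omega)) (fun i hi => hstep i (by omega))
    have h2 := hstep k (by omega)
    linarith

private lemma geom_quarter (N : ℕ) : ∑ j ∈ Finset.range N, ((1:ℝ) / 4) ^ (j + 1) ≤ 1 / 3 := by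
  have h : ∀ N : ℕ, ∑ j ∈ Finset.range N, ((1:ℝ) / 4) ^ (j + 1) = 1 / 3 - (1 / 3) * (1 / 4) ^ N := by
    intro N
    induction N with
    | zero => simp
    | succ N ih => rw [Finset.sum_range_succ, ih, pow_succ]; ring
  rw [h]
  have : (0:ℝ) ≤ (1 / 4) ^ N := by positivity
  linarith

private lemma crit (m : ℕ) (hm : 1 ≤ m) (c : ℕ → ℝ) (hc : ∀ i ≤ m, 0 < c i)
    (hlc : ∀ i, i + 2 ≤ m → c (i + 2) * c i ≤ (1 / 16) * c (i + 1) ^ 2) :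
    HurwitzStable (∑ i ∈ Finset.range (m + 1), Polynomial.C (c i) * Polynomial.X ^ i) := by
  classical
  intro z hz
  by_contra hre
  push_neg at hre
  have hev : (∑ i ∈ Finset.range (m + 1), ((c i : ℂ)) * z ^ i) = 0 := by
    rw [← hz]
    simp [map_sum]
  have hz0 : z ≠ 0 := by
    rintro rfl
    rw [Finset.sum_eq_single 0 (fun i _ hi => by simp [zero_pow hi]) (by simp)] at hev
    simp at hev
    exact absurd hev (hc 0 (by omega)).ne'
  set ρ := ‖z‖ with hρdef
  have hρ : 0 < ρ := norm_pos_iff.mpr hz0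
  set t : ℕ → ℝ := fun i => c i * ρ ^ i with htdef
  have ht : ∀ i ≤ m, 0 < t i := fun i hi => mul_pos (hc i hi) (pow_pos hρ i)
  have hstep : ∀ i, i + 2 ≤ m → t (i + 2) * t i ≤ (1 / 16) * t (i + 1) ^ 2 := by
    intro i hi
    have h := hlc i hi
    have e1 : t (i + 2) * t i = (c (i + 2) * c i) * (ρ ^ (i + 1)) ^ 2 := by
      simp only [htdef]; ring
    have e2 : t (i + 1) ^ 2 = c (i + 1) ^ 2 * (ρ ^ (i + 1)) ^ 2 := by
      simp only [htdef]; ring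
    rw [e1, e2]
    have := mul_le_mul_of_nonneg_right h (sq_nonneg (ρ ^ (i + 1)))
    linarith
  set k := Nat.findGreatest (fun i => 4 * t (i - 1) < t i) (m - 1) with hkdef
  have hkle : k ≤ m - 1 := Nat.findGreatest_le _
  have hk1m : k + 1 ≤ m := by omega
  -- downward chain below k
  have haux : ∀ d i, i + d + 1 = k → 4 * t i < t (i + 1) := by
    intro d
    induction d with
    | zero =>
      intro i hik
      have hk0 : k ≠ 0 := by omega
      have hqk : 4 * t (k - 1) < t k := Nat.findGreatest_of_ne_zero hkdef.symm hk0
      have e : k - 1 = i := by omega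
      have e2 : k = i + 1 := by omega
      rw [e, e2] at hqk
      exact hqk
    | succ d ih =>
      intro i hik
      have h1 : 4 * t (i + 1) < t (i + 2) := ih (i + 1) (by omega)
      have h2 := hstep i (by omega)
      have p0 := ht i (by omega)
      have p1 := ht (i + 1) (by omega)
      have p2 := ht (i + 2) (by omega)
      nlinarith [mul_lt_mul_of_pos_right h1 p0]
  have hlow : ∀ i, i < k → 4 * t i < t (i + 1) := by
    intro i hik
    have e : i + (k - i - 1) + 1 = k := by omega
    exact haux (k - i - 1) i e
  -- upward chain above k
  have hhigh : ∀ i, k + 1 ≤ i → i + 1 ≤ m → t (i + 1) ≤ (1 / 4) * t i := by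
    intro i hi
    induction i, hi using Nat.le_induction with
    | base =>
      intro him
      have hnot : ¬ (4 * t (k + 1 - 1) < t (k + 1)) :=
        Nat.findGreatest_is_greatest (P := fun i => 4 * t (i - 1) < t i) (n := m - 1)
          (by rw [← hkdef]; omega) (by omega)
      have e : k + 1 - 1 = k := by omega
      rw [e] at hnot
      push_neg at hnot
      have h2 := hstep k (by omega)
      have p0 := ht k (by omega)
      have p1 := ht (k + 1) (by omega)
      have p2 := ht (k + 2) (by omega)
      nlinarith
    | succ i hi ihp =>
      intro him
      have hIH := ihp (by omega)
      have h2 := hstep i (by omega)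
      have p0 := ht i (by omega)
      have p1 := ht (i + 1) (by omega)
      have p2 := ht (i + 2) (by omega)
      nlinarith
  have hpow : ∀ j, k + 1 + j ≤ m → t (k + 1 + j) ≤ (1 / 4) ^ j * t (k + 1) := by
    intro j
    induction j with
    | zero => intro _; simp
    | succ j ih =>
      intro hj
      have h1 := ih (by omega)
      have h2 : t (k + 1 + j + 1) ≤ (1 / 4) * t (k + 1 + j) := hhigh (k + 1 + j) (by omega) (by omega)
      have e : k + 1 + (j + 1) = k + 1 + j + 1 := by omega
      rw [e, pow_succ]
      nlinarith
  -- sum bounds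
  have Slow : ∑ i ∈ Finset.range k, t i ≤ (1 / 3) * t k :=
    geom_low_aux t k (fun i hi => (ht i (by omega)).le) (fun i hi => (hlow i hi).le)
  have Shigh : ∑ j ∈ Finset.range (m - (k + 1)), t (k + 2 + j) ≤ (1 / 3) * t (k + 1) := by
    calc ∑ j ∈ Finset.range (m - (k + 1)), t (k + 2 + j)
        ≤ ∑ j ∈ Finset.range (m - (k + 1)), (1 / 4) ^ (j + 1) * t (k + 1) := by
          apply Finset.sum_le_sum
          intro j hj
          rw [Finset.mem_range] at hj
          have e : k + 2 + j = k + 1 + (j + 1) := by omega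
          rw [e]
          exact hpow (j + 1) (by omega)
      _ = (∑ j ∈ Finset.range (m - (k + 1)), ((1:ℝ) / 4) ^ (j + 1)) * t (k + 1) := by
          rw [Finset.sum_mul]
      _ ≤ (1 / 3) * t (k + 1) := by
          have := geom_quarter (m - (k + 1))
          have hp := (ht (k + 1) (by omega)).le
          nlinarith
  -- split the vanishing sum
  rw [show m + 1 = (k + 2) + (m - (k + 1)) by omega, Finset.sum_range_add,
    Finset.sum_range_succ, Finset.sum_range_succ] at hev
  have hpair : (c k : ℂ) * z ^ k + (c (k + 1) : ℂ) * z ^ (k + 1) =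
      -((∑ i ∈ Finset.range k, (c i : ℂ) * z ^ i)
        + ∑ j ∈ Finset.range (m - (k + 1)), (c (k + 2 + j) : ℂ) * z ^ (k + 2 + j)) := by
    linear_combination hev
  -- absolute value of each term
  have habs : ∀ i, i ≤ m → ‖(c i : ℂ) * z ^ i‖ = t i := by
    intro i hi
    rw [norm_mul, norm_pow, Complex.norm_real, Real.norm_eq_abs, abs_of_pos (hc i hi)]
  -- lower bound on the pair
  have hfac : (c k : ℂ) * z ^ k + (c (k + 1) : ℂ) * z ^ (k + 1)
      = z ^ k * ((c k : ℂ) + (c (k + 1) : ℂ) * z) := by ring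
  have hρ2 : ρ ^ 2 = z.re * z.re + z.im * z.im := by
    rw [hρdef, Complex.sq_norm, Complex.normSq_apply]
  have hck := hc k (by omega)
  have hck1 := hc (k + 1) (by omega)
  have hinner1 : c k ≤ ‖(c k : ℂ) + (c (k + 1) : ℂ) * z‖ := by
    apply le_of_pow_le_pow_left₀ two_ne_zero (norm_nonneg _)
    rw [Complex.sq_norm, Complex.normSq_apply]
    simp only [Complex.add_re, Complex.add_im, Complex.ofReal_re, Complex.ofReal_im,
      Complex.mul_re, Complex.mul_im]
    nlinarith [mul_nonneg (mul_nonneg hck.le hck1.le) hre, sq_nonneg (c (k + 1) * z.re),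
      sq_nonneg (c (k + 1) * z.im)]
  have hinner2 : c (k + 1) * ρ ≤ ‖(c k : ℂ) + (c (k + 1) : ℂ) * z‖ := by
    apply le_of_pow_le_pow_left₀ two_ne_zero (norm_nonneg _)
    rw [Complex.sq_norm, Complex.normSq_apply]
    simp only [Complex.add_re, Complex.add_im, Complex.ofReal_re, Complex.ofReal_im,
      Complex.mul_re, Complex.mul_im]
    have h6 : (c (k + 1)) ^ 2 * ρ ^ 2 = (c (k + 1)) ^ 2 * (z.re * z.re + z.im * z.im) := by
      rw [hρ2]
    nlinarith [mul_nonneg (mul_nonneg hck.le hck1.le) hre, sq_nonneg (c k), h6]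
  have habs_pair : ‖(c k : ℂ) * z ^ k + (c (k + 1) : ℂ) * z ^ (k + 1)‖
      = ρ ^ k * ‖(c k : ℂ) + (c (k + 1) : ℂ) * z‖ := by
    rw [hfac, norm_mul, norm_pow]
  have hpk : (0:ℝ) < ρ ^ k := pow_pos hρ k
  have hb1 : t k ≤ ‖(c k : ℂ) * z ^ k + (c (k + 1) : ℂ) * z ^ (k + 1)‖ := by
    rw [habs_pair, htdef]
    calc c k * ρ ^ k = ρ ^ k * c k := by ring
      _ ≤ ρ ^ k * ‖(c k : ℂ) + (c (k + 1) : ℂ) * z‖ :=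
          mul_le_mul_of_nonneg_left hinner1 hpk.le
  have hb2 : t (k + 1) ≤ ‖(c k : ℂ) * z ^ k + (c (k + 1) : ℂ) * z ^ (k + 1)‖ := by
    rw [habs_pair, htdef]
    calc c (k + 1) * ρ ^ (k + 1) = ρ ^ k * (c (k + 1) * ρ) := by ring
      _ ≤ ρ ^ k * ‖(c k : ℂ) + (c (k + 1) : ℂ) * z‖ :=
          mul_le_mul_of_nonneg_left hinner2 hpk.le
  -- upper bound from the rest
  have h5 : ‖(c k : ℂ) * z ^ k + (c (k + 1) : ℂ) * z ^ (k + 1)‖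
      ≤ (1 / 3) * t k + (1 / 3) * t (k + 1) := by
    rw [hpair, norm_neg]
    calc ‖(∑ i ∈ Finset.range k, (c i : ℂ) * z ^ i)
          + ∑ j ∈ Finset.range (m - (k + 1)), (c (k + 2 + j) : ℂ) * z ^ (k + 2 + j)‖
        ≤ ‖∑ i ∈ Finset.range k, (c i : ℂ) * z ^ i‖
          + ‖∑ j ∈ Finset.range (m - (k + 1)), (c (k + 2 + j) : ℂ) * z ^ (k + 2 + j)‖ :=
          norm_add_le _ _
      _ ≤ (∑ i ∈ Finset.range k, t i)
          + ∑ j ∈ Finset.range (m - (k + 1)), t (k + 2 + j) := by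
          gcongr ?_ + ?_
          · calc ‖∑ i ∈ Finset.range k, (c i : ℂ) * z ^ i‖
                ≤ ∑ i ∈ Finset.range k, ‖(c i : ℂ) * z ^ i‖ :=
                  norm_sum_le _ _
              _ = ∑ i ∈ Finset.range k, t i := by
                  apply Finset.sum_congr rfl
                  intro i hi
                  rw [Finset.mem_range] at hi
                  exact habs i (by omega)
          · calc ‖∑ j ∈ Finset.range (m - (k + 1)), (c (k + 2 + j) : ℂ) * z ^ (k + 2 + j)‖
                ≤ ∑ j ∈ Finset.range (m - (k + 1)), ‖(c (k + 2 + j) : ℂ) * z ^ (k + 2 + j)‖ :=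
                  norm_sum_le _ _
              _ = ∑ j ∈ Finset.range (m - (k + 1)), t (k + 2 + j) := by
                  apply Finset.sum_congr rfl
                  intro j hj
                  rw [Finset.mem_range] at hj
                  exact habs _ (by omega)
      _ ≤ (1 / 3) * t k + (1 / 3) * t (k + 1) := add_le_add Slow Shigh
  have htk := ht k (by omega)
  linarith

theorem stabilization_by_hadamard (n : ℕ) (hn : 3 ≤ n) (a : ℕ → ℝ) (ha : ∀ i ≤ n, 0 < a i) :
    ∀ m, 3 ≤ m → m ≤ n → ∃ b : ℕ → ℝ,
      (∀ i ≤ m, 0 < b i) ∧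
      HurwitzStable (∑ i ∈ Finset.range (m + 1), Polynomial.C (b i) * Polynomial.X ^ i) ∧
      ∀ j ≤ n - m,
        HurwitzStable
          (∑ i ∈ Finset.range (m + 1), Polynomial.C (a (j + i) * b i) * Polynomial.X ^ i) := by
  intro m hm3 hmn
  have hne : (Finset.range (n + 1)).Nonempty := ⟨0, by simp⟩
  set α := (Finset.range (n + 1)).inf' hne a with hαdef
  set A := (Finset.range (n + 1)).sup' hne a with hAdef
  have hαle : ∀ i ≤ n, α ≤ a i := fun i hi =>
    Finset.inf'_le a (by simp [Finset.mem_range]; omega)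
  have hAle : ∀ i ≤ n, a i ≤ A := fun i hi =>
    Finset.le_sup' a (by simp [Finset.mem_range]; omega)
  have hα : 0 < α := by
    rw [hαdef, Finset.lt_inf'_iff]
    intro i hi
    rw [Finset.mem_range] at hi
    exact ha i (by omega)
  have hA : 0 < A := lt_of_lt_of_le hα (le_trans (hαle 0 (by omega)) (hAle 0 (by omega)))
  have hαA : α ≤ A := le_trans (hαle 0 (by omega)) (hAle 0 (by omega))
  set ε := α / (4 * A) with hεdef
  have hε : 0 < ε := by positivity
  have hε4 : ε ≤ 1 / 4 := by
    rw [hεdef, div_le_iff₀ (by positivity)]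
    linarith
  refine ⟨fun i => ε ^ (i * i), fun i _ => pow_pos hε _, ?_, ?_⟩
  · -- g itself is stable
    apply crit m (by omega)
    · intro i _; exact pow_pos hε _
    · intro i hi
      have hbkey : ε ^ ((i + 2) * (i + 2)) * ε ^ (i * i) = ε ^ 2 * (ε ^ ((i + 1) * (i + 1))) ^ 2 := by
        rw [← pow_add, ← pow_mul, ← pow_add]
        congr 1
        ring
      rw [hbkey]
      have h1 : ε ^ 2 ≤ 1 / 16 := by nlinarith
      have h2 : (0:ℝ) ≤ (ε ^ ((i + 1) * (i + 1))) ^ 2 := sq_nonneg _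
      nlinarith [sq_nonneg (ε ^ ((i + 1) * (i + 1)))]
  · intro j hj
    apply crit m (by omega)
    · intro i hi
      exact mul_pos (ha (j + i) (by omega)) (pow_pos hε _)
    · intro i hi
      have hbkey : ε ^ ((i + 2) * (i + 2)) * ε ^ (i * i) = ε ^ 2 * (ε ^ ((i + 1) * (i + 1))) ^ 2 := by
        rw [← pow_add, ← pow_mul, ← pow_add]
        congr 1
        ring
      have hjn : j + (i + 2) ≤ n := by omega
      have h2 : a (j + (i + 2)) ≤ A := hAle _ (by omega)
      have h0 : a (j + i) ≤ A := hAle _ (by omega)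
      have h1 : α ≤ a (j + (i + 1)) := hαle _ (by omega)
      have hp2 := ha (j + (i + 2)) (by omega)
      have hp0 := ha (j + i) (by omega)
      have hp1 := ha (j + (i + 1)) (by omega)
      have key : a (j + (i + 2)) * a (j + i) * ε ^ 2 ≤ (1 / 16) * a (j + (i + 1)) ^ 2 := by
        have t1 : a (j + (i + 2)) * a (j + i) ≤ A * A :=
          mul_le_mul h2 h0 hp0.le hA.le
        have t2 : α ^ 2 ≤ a (j + (i + 1)) ^ 2 := by nlinarith
        have t3 : a (j + (i + 2)) * a (j + i) * ε ^ 2 ≤ A * A * ε ^ 2 :=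
          mul_le_mul_of_nonneg_right t1 (sq_nonneg ε)
        have t4 : A * A * ε ^ 2 = α ^ 2 / 16 := by
          rw [hεdef]
          field_simp
          ring
        rw [t4] at t3
        linarith
      calc (a (j + (i + 2)) * ε ^ ((i + 2) * (i + 2))) * (a (j + i) * ε ^ (i * i))
          = (a (j + (i + 2)) * a (j + i) * ε ^ 2) * (ε ^ ((i + 1) * (i + 1))) ^ 2 := by
            rw [mul_mul_mul_comm, hbkey]; ring
        _ ≤ ((1 / 16) * a (j + (i + 1)) ^ 2) * (ε ^ ((i + 1) * (i + 1))) ^ 2 :=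
            mul_le_mul_of_nonneg_right key (sq_nonneg _)
        _ = (1 / 16) * (a (j + (i + 1)) * ε ^ ((i + 1) * (i + 1))) ^ 2 := by ring
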